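/- An integral domain D is unit-additive if and only if for all nonzero d, e, f ∈ D with d = 1/e + 1/f (equality in the fraction field), d is a unit of D. In particular, any E-simple domain is unit-additive. -/

import Mathlib

noncomputable def recip (D : Type*) [CommRing D] [IsDomain D] : Subring (FractionRing D) :=
  Subring.closure {x | ∃ d : D, d ≠ 0 ∧ x = (algebraMap D (FractionRing D) d)⁻¹}

/-- `D` is unit-additive: the sum of any two units is a unit or zero (zero = nilpotent
in a domain). -/
def UnitAdditive (D : Type*) [CommRing D] [IsDomain D] : Prop :=
  ∀ u v : Dˣ, (u : D) + v = 0 ∨ IsUnit ((u : D) + v)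

/-- `D` is E-simple: every nonzero Egyptian element is a unit. -/
def ESimple (D : Type*) [CommRing D] [IsDomain D] : Prop :=
  ∀ d : D, d ≠ 0 → algebraMap D (FractionRing D) d ∈ recip D → IsUnit d

lemma stmt_1_aux (D : Type*) [CommRing D] [IsDomain D] :
    UnitAdditive D ↔
      ∀ d e f : D, d ≠ 0 → e ≠ 0 → f ≠ 0 →
        algebraMap D (FractionRing D) d =
          (algebraMap D (FractionRing D) e)⁻¹ + (algebraMap D (FractionRing D) f)⁻¹ →
        IsUnit d := by
  set φ := algebraMap D (FractionRing D) with hφ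
  have hinj : Function.Injective φ := IsFractionRing.injective D (FractionRing D)
  constructor
  · intro hUA d e f hd he hf heq
    have he' : φ e ≠ 0 := fun h => he (hinj (by simpa using h))
    have hf' : φ f ≠ 0 := fun h => hf (hinj (by simpa using h))
    have key : d * e * f = e + f := by
      apply hinj
      rw [map_mul, map_mul, map_add, heq]
      field_simp
      ring
    have h1 : e = f * (d * e - 1) := by linear_combination -key
    have h2 : f = e * (d * f - 1) := by linear_combination -key
    have h3 : e * ((d * f - 1) * (d * e - 1)) = e * 1 := by
      linear_combination -h1 - (d * e - 1) * h2
    have h4 : (d * f - 1) * (d * e - 1) = 1 := mul_left_cancel₀ he h3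
    have hu : IsUnit (d * e - 1) := IsUnit.of_mul_eq_one (d * f - 1) (by linear_combination h4)
    obtain ⟨u, hu⟩ := hu
    have := hUA 1 u
    rw [Units.val_one, hu] at this
    have hde : (1 : D) + (d * e - 1) = d * e := by ring
    rw [hde] at this
    rcases this with h | h
    · exact absurd h (mul_ne_zero hd he)
    · exact isUnit_of_mul_isUnit_left h
  · intro H u v
    by_cases h0 : (u : D) + v = 0
    · exact Or.inl h0
    · refine Or.inr (H _ (↑u⁻¹) (↑v⁻¹) h0 (Units.ne_zero _) (Units.ne_zero _) ?_)
      have hu : (φ ↑u⁻¹)⁻¹ = φ u := by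
        refine inv_eq_of_mul_eq_one_right ?_
        rw [← map_mul]; simp
      have hv : (φ ↑v⁻¹)⁻¹ = φ v := by
        refine inv_eq_of_mul_eq_one_right ?_
        rw [← map_mul]; simp
      rw [hu, hv, map_add]

/-- A domain `D` is unit-additive iff whenever `d = 1/e + 1/f` for
nonzero `d, e, f ∈ D`, the element `d` is a unit.  In particular, every E-simple
domain is unit-additive. -/
theorem stmt_1 (D : Type*) [CommRing D] [IsDomain D] :
    (UnitAdditive D ↔
      ∀ d e f : D, d ≠ 0 → e ≠ 0 → f ≠ 0 →
        algebraMap D (FractionRing D) d =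
          (algebraMap D (FractionRing D) e)⁻¹ + (algebraMap D (FractionRing D) f)⁻¹ →
        IsUnit d) ∧
    (ESimple D → UnitAdditive D) := by
  refine ⟨stmt_1_aux D, fun hE => (stmt_1_aux D).mpr ?_⟩
  intro d e f hd he hf heq
  exact hE d hd (heq ▸ add_mem
    (Subring.subset_closure ⟨e, he, rfl⟩)
    (Subring.subset_closure ⟨f, hf, rfl⟩))
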